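/- For every real number τ ≥ 1 one has Π(τ, 0) ≤ 2·(2^(τ·ξ) + 1). -/

import Mathlib

set_option linter.unusedSectionVars false


open scoped Classical ENNReal
open Real Set Filter

/-- The quadratic function `Q(s) = q·s²`. -/
noncomputable def Qf (q : ℤ) (s : ℝ) : ℝ := (q : ℝ) * s ^ 2

/-- The half-open interval `I_s = [2^(Q(s)), 2^(Q(s)) + Q(s+1) − Q(s) + Ξ)`. -/
noncomputable def Iset (q Ξ : ℤ) (s : ℝ) : Set ℝ :=
  Set.Ico ((2 : ℝ) ^ (Qf q s)) ((2 : ℝ) ^ (Qf q s) + Qf q (s + 1) - Qf q s + (Ξ : ℝ))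

/-- The half-open interval `J_s = [2^(Q(s)) + Q(s+1) − Q(s) + Ξ, 2^(Q(s+1)))`. -/
noncomputable def Jset (q Ξ : ℤ) (s : ℝ) : Set ℝ :=
  Set.Ico ((2 : ℝ) ^ (Qf q s) + Qf q (s + 1) - Qf q s + (Ξ : ℝ)) ((2 : ℝ) ^ (Qf q (s + 1)))

/-- The sequence `(x_j)` in `{0,1}`: `x_j = 0` iff `j + 1 ∈ I_s` for some integer `s ≥ 0`. -/
noncomputable def xseq (q Ξ : ℤ) (j : ℕ) : ℕ :=
  if ∃ s : ℕ, ((j : ℝ) + 1) ∈ Iset q Ξ (s : ℝ) then 0 else 1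

/-- `N(k) = #{ j ∈ {0,…,k−1} : x_j = 0 }`, with `N(0) = 0`. -/
noncomputable def Nf (q Ξ : ℤ) (k : ℕ) : ℕ :=
  ((Finset.range k).filter (fun j => xseq q Ξ j = 0)).card

/-- `B(0) = 0`, `B(1) = 1`, and for `k ≥ 2`,
`B(k) = 1 + #{ j ∈ {0,…,k−2} : x_j ≠ x_{j+1} }`. -/
noncomputable def Bf (q Ξ : ℤ) (k : ℕ) : ℕ :=
  if k = 0 then 0
  else 1 + ((Finset.range (k - 1)).filter (fun j => xseq q Ξ j ≠ xseq q Ξ (j + 1))).card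

/-- The length `|J_s| = 2^(Q(s+1)) − 2^(Q(s)) − (Q(s+1) − Q(s) + Ξ)` of `J_s`. -/
noncomputable def Jlen (q Ξ : ℤ) (s : ℝ) : ℝ :=
  (2 : ℝ) ^ (Qf q (s + 1)) - (2 : ℝ) ^ (Qf q s) - (Qf q (s + 1) - Qf q s + (Ξ : ℝ))

/-- `λ(s) = 1/|J_s|`. -/
noncomputable def lamf (q Ξ : ℤ) (s : ℝ) : ℝ := 1 / Jlen q Ξ s

/-- The two-variable series `Π(τ,λ) = Σ_{k≥0} 2^(−λk − τ·N(k) + τ·ξ·B(k))`, a sum in `[0,∞]`. -/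
noncomputable def Pi2 (q Ξ : ℤ) (ξ τ lam : ℝ) : ℝ≥0∞ :=
  ∑' k : ℕ, ENNReal.ofReal
    ((2 : ℝ) ^ (-lam * (k : ℝ) - τ * (Nf q Ξ k : ℝ) + τ * ξ * (Bf q Ξ k : ℝ)))

/-- start of zero block `s` -/
def An (q : ℤ) (s : ℕ) : ℕ := 2 ^ (q.toNat * s ^ 2)

/-- length of zero block `s` -/
def Lnn (q Ξ : ℤ) (s : ℕ) : ℕ := (q * (2 * s + 1) + Ξ).toNat

/-- total length of first `s` zero blocks -/
def Sacc (q Ξ : ℤ) (s : ℕ) : ℕ := (q * s ^ 2 + s * Ξ).toNat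

section basic
variable {q Ξ : ℤ} (hq : 3 ≤ q) (hqΞ : 1 ≤ q + Ξ)
include hq hqΞ

omit hqΞ in
lemma qtn : (q.toNat : ℤ) = q := Int.toNat_of_nonneg (by omega)

lemma Lpos (s : ℕ) : 1 ≤ q * (2 * s + 1) + Ξ := by
  have h : (0:ℤ) ≤ s := Int.natCast_nonneg s
  have h2 : (0:ℤ) ≤ q * s := by positivity
  nlinarith

lemma Ln_cast (s : ℕ) : (Lnn q Ξ s : ℤ) = q * (2 * s + 1) + Ξ := by
  have := Lpos hq hqΞ s
  simp only [Lnn]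
  omega

lemma Lnn_pos (s : ℕ) : 1 ≤ Lnn q Ξ s := by
  have h1 := Lpos hq hqΞ s
  have h2 := Ln_cast hq hqΞ s
  omega

lemma Sacc_cast (s : ℕ) : (Sacc q Ξ s : ℤ) = q * s ^ 2 + s * Ξ := by
  have h : (0:ℤ) ≤ q * s ^ 2 + s * Ξ := by
    rcases Nat.eq_zero_or_pos s with h | h
    · simp [h]
    · have h1 : (1:ℤ) ≤ s := by exact_mod_cast h
      have h2 : (1:ℤ) ≤ q * s + Ξ := by nlinarith
      have h3 : (q * s + Ξ) * s ≥ 1 * s := by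
        apply mul_le_mul_of_nonneg_right h2 (by linarith)
      nlinarith
  simp only [Sacc]
  omega

lemma Sacc_succ (s : ℕ) : Sacc q Ξ (s+1) = Sacc q Ξ s + Lnn q Ξ s := by
  have h1 := Sacc_cast hq hqΞ (s+1)
  have h2 := Sacc_cast hq hqΞ s
  have h3 := Ln_cast hq hqΞ s
  have : (Sacc q Ξ (s+1) : ℤ) = (Sacc q Ξ s : ℤ) + (Lnn q Ξ s : ℤ) := by
    rw [h1, h2, h3]; push_cast; ring
  exact_mod_cast this

omit hq hqΞ in
lemma An_pos (s : ℕ) : 1 ≤ An q s := Nat.one_le_two_pow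

omit hq hqΞ in
lemma An_mono {s t : ℕ} (h : s ≤ t) : An q s ≤ An q t :=
  Nat.pow_le_pow_right (by norm_num) (Nat.mul_le_mul_left _ (Nat.pow_le_pow_left h 2))

omit hq hqΞ in
lemma An_zero : An q 0 = 1 := by simp [An]

end basic

section gap
variable {q Ξ : ℤ} (hq : 3 ≤ q) (hqΞ : 1 ≤ q + Ξ)
  (hpowZ : q + 1 + Ξ ≤ 2 ^ (q.toNat - 1))
include hq hqΞ hpowZ

lemma hgap (s : ℕ) : An q s + Lnn q Ξ s < An q (s + 1) := by
  have hq3 : 3 ≤ q.toNat := by omega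
  set n := q.toNat with hn
  have hqn : (n : ℤ) = q := qtn hq
  have key : (An q s : ℤ) + (Lnn q Ξ s : ℤ) < (An q (s+1) : ℤ) := by
    rw [Ln_cast hq hqΞ]
    have cA : (An q s : ℤ) = 2 ^ (n * s ^ 2) := by simp [An, hn]
    have cA' : (An q (s+1) : ℤ) = 2 ^ (n * s ^ 2) * 2 ^ (n * (2*s+1)) := by
      simp only [An, ← pow_add, Nat.cast_pow]
      norm_num
      congr 1
      ring
    rw [cA, cA']
    have e1 : (2:ℤ) ^ (n * (2*s+1)) = 2 ^ (n-1) * 2 ^ (2*n*s+1) := by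
      rw [← pow_add]
      congr 1
      have h1 : 1 ≤ n := by omega
      zify [h1]
      ring
    have e2 : (2*n*s+1 : ℤ) + 1 ≤ (2:ℤ) ^ (2*n*s+1) := by
      have := Nat.lt_two_pow_self (n := 2*n*s+1)
      exact_mod_cast this
    have e3 : (4:ℤ) ≤ 2 ^ (n-1) := by
      calc (4:ℤ) = 2 ^ 2 := by norm_num
      _ ≤ 2 ^ (n-1) := pow_le_pow_right₀ (by norm_num) (by omega)
    have e4 : (1:ℤ) ≤ 2 ^ (n * s ^ 2) := one_le_pow₀ (by norm_num)
    have hs0 : (0:ℤ) ≤ (s:ℤ) := Int.natCast_nonneg s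
    have hM : q * (2*s+1) + Ξ + 2 ≤ (2:ℤ) ^ (n * (2*s+1)) := by
      rw [e1]
      have h7 : ((2:ℤ)^(n-1)) * ((2*n*s+1:ℤ) + 1) ≤ 2^(n-1) * 2^(2*n*s+1) :=
        mul_le_mul_of_nonneg_left e2 (by positivity)
      nlinarith [mul_le_mul_of_nonneg_right e3 (by positivity : (0:ℤ) ≤ 2*(n:ℤ)*s+1)]
    have hL : (1:ℤ) ≤ q * (2*s+1) + Ξ := Lpos hq hqΞ s
    have h8 : (2:ℤ) ^ (n * s ^ 2) * (q * (2*s+1) + Ξ + 2) ≤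
        2 ^ (n * s ^ 2) * 2 ^ (n * (2*s+1)) :=
      mul_le_mul_of_nonneg_left hM (by positivity)
    have h9 : 1 * (q * (2*s+1) + Ξ) ≤ (2:ℤ) ^ (n * s ^ 2) * (q * (2*s+1) + Ξ) :=
      mul_le_mul_of_nonneg_right e4 (by linarith)
    nlinarith
  exact_mod_cast key

end gap

section bridge
variable {q Ξ : ℤ} (hq : 3 ≤ q) (hqΞ : 1 ≤ q + Ξ)
include hq hqΞ

lemma rpow_Qf (s : ℕ) : (2:ℝ) ^ (Qf q (s:ℝ)) = (An q s : ℝ) := by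
  have hc : (q:ℝ) * (s:ℝ) ^ 2 = ((q.toNat * s ^ 2 : ℕ) : ℝ) := by
    have h1 : ((q.toNat : ℤ) : ℝ) = (q : ℝ) := by rw [qtn hq]
    push_cast at h1 ⊢
    rw [h1]
  rw [Qf, hc, Real.rpow_natCast]
  simp [An]

lemma Qf_diff (s : ℕ) : Qf q ((s:ℝ) + 1) - Qf q (s:ℝ) + (Ξ:ℝ) = ((q * (2*s+1) + Ξ : ℤ) : ℝ) := by
  simp only [Qf]
  push_cast
  ring

lemma xseq_zero_iff (j : ℕ) :
    xseq q Ξ j = 0 ↔ ∃ s : ℕ, An q s ≤ j + 1 ∧ j + 1 < An q s + Lnn q Ξ s := by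
  have hiff : ∀ s : ℕ, (((j:ℝ) + 1) ∈ Iset q Ξ (s:ℝ)) ↔
      (An q s ≤ j + 1 ∧ j + 1 < An q s + Lnn q Ξ s) := by
    intro s
    rw [Iset, Set.mem_Ico]
    constructor
    · rintro ⟨h1, h2⟩
      rw [rpow_Qf hq hqΞ] at h1 h2
      constructor
      · exact_mod_cast h1
      · have h2' : (j:ℝ) + 1 < (An q s : ℝ) + ((q * (2*s+1) + Ξ : ℤ) : ℝ) := by
          have := Qf_diff (Ξ := Ξ) hq hqΞ s
          push_cast at this ⊢
          push_cast at h2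
          linarith
        have h2'' : (j:ℤ) + 1 < (An q s : ℤ) + (q * (2*s+1) + Ξ) := by exact_mod_cast h2'
        rw [← Ln_cast hq hqΞ] at h2''
        exact_mod_cast h2''
    · rintro ⟨h1, h2⟩
      rw [rpow_Qf hq hqΞ]
      constructor
      · exact_mod_cast h1
      · have h2' : (j:ℤ) + 1 < (An q s : ℤ) + (q * (2*s+1) + Ξ) := by
          rw [← Ln_cast hq hqΞ]
          exact_mod_cast h2
        have h2'' : (j:ℝ) + 1 < (An q s : ℝ) + ((q * (2*s+1) + Ξ : ℤ) : ℝ) := by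
          exact_mod_cast h2'
        have hd := Qf_diff (Ξ := Ξ) hq hqΞ s
        push_cast at h2'' hd ⊢
        linarith
  rw [xseq]
  split_ifs with h
  · simp only [true_iff]
    obtain ⟨s, hs⟩ := h
    exact ⟨s, (hiff s).1 hs⟩
  · constructor
    · intro h1; exact absurd h1 (by norm_num)
    · rintro ⟨s, hs⟩
      exact absurd ⟨s, (hiff s).2 hs⟩ h
end bridge

section xvals
variable {q Ξ : ℤ} (hq : 3 ≤ q) (hqΞ : 1 ≤ q + Ξ)
  (hpowZ : q + 1 + Ξ ≤ 2 ^ (q.toNat - 1))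
include hq hqΞ

lemma xseq_zero {s j : ℕ} (h1 : An q s ≤ j + 1) (h2 : j + 1 < An q s + Lnn q Ξ s) :
    xseq q Ξ j = 0 :=
  (xseq_zero_iff hq hqΞ j).2 ⟨s, h1, h2⟩

include hpowZ in
lemma xseq_one {s j : ℕ} (h1 : An q s + Lnn q Ξ s ≤ j + 1) (h2 : j + 1 < An q (s+1)) :
    xseq q Ξ j = 1 := by
  have hnot : ¬ (xseq q Ξ j = 0) := by
    rw [xseq_zero_iff hq hqΞ j]
    rintro ⟨t, ht1, ht2⟩
    rcases lt_trichotomy t s with h | h | h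
    · have : An q t + Lnn q Ξ t < An q (t+1) := hgap hq hqΞ hpowZ t
      have hAt : An q (t+1) ≤ An q s := An_mono (by omega)
      omega
    · subst h; omega
    · have hAt : An q (s+1) ≤ An q t := An_mono (by omega)
      omega
  rw [xseq] at hnot ⊢
  split_ifs at hnot ⊢ with h
  · exact absurd rfl hnot
  · rfl

end xvals

section recur
variable (q Ξ : ℤ)

lemma Nf_zero : Nf q Ξ 0 = 0 := by simp [Nf]

lemma Nf_succ (k : ℕ) :
    Nf q Ξ (k+1) = Nf q Ξ k + if xseq q Ξ k = 0 then 1 else 0 := by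
  rw [Nf, Nf, Finset.range_add_one, Finset.filter_insert]
  split_ifs with h
  · rw [Finset.card_insert_of_notMem (fun hmem => by
      have := Finset.mem_filter.1 hmem
      simp at this)]
  · simp

lemma Bf_zero : Bf q Ξ 0 = 0 := by simp [Bf]

lemma Bf_one : Bf q Ξ 1 = 1 := by simp [Bf]

lemma Bf_succ (k : ℕ) :
    Bf q Ξ (k+2) = Bf q Ξ (k+1) + if xseq q Ξ k ≠ xseq q Ξ (k+1) then 1 else 0 := by
  have h1 : (k+2) - 1 = (k) + 1 := rfl
  have h2 : (k+1) - 1 = k := rfl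
  rw [Bf, Bf, if_neg (by omega), if_neg (by omega), h1, h2, Finset.range_add_one,
    Finset.filter_insert]
  split_ifs with h
  · rw [Finset.card_insert_of_notMem (fun hmem => by
      have := Finset.mem_filter.1 hmem
      simp at this)]
    ring
  · simp

end recur

section main
variable {q Ξ : ℤ} (hq : 3 ≤ q) (hqΞ : 1 ≤ q + Ξ)
  (hpowZ : q + 1 + Ξ ≤ 2 ^ (q.toNat - 1))
include hq hqΞ hpowZ

/-- values in zero block `s` at depth `m` -/
def ZoneP (q Ξ : ℤ) (s : ℕ) : Prop := ∀ m, 1 ≤ m → m ≤ Lnn q Ξ s →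
  Nf q Ξ (An q s - 1 + m) = Sacc q Ξ s + m ∧ Bf q Ξ (An q s - 1 + m) = 2*s+1

/-- values in one block `s` -/
def OneP (q Ξ : ℤ) (s : ℕ) : Prop := ∀ k, An q s + Lnn q Ξ s ≤ k → k ≤ An q (s+1) - 1 →
  Nf q Ξ k = Sacc q Ξ (s+1) ∧ Bf q Ξ k = 2*s+2

omit hpowZ in
lemma zone_extend (s m : ℕ) (h1 : 1 ≤ m) (h2 : m + 1 ≤ Lnn q Ξ s)
    (hN : Nf q Ξ (An q s - 1 + m) = Sacc q Ξ s + m)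
    (hB : Bf q Ξ (An q s - 1 + m) = 2*s+1) :
    Nf q Ξ (An q s - 1 + (m+1)) = Sacc q Ξ s + (m+1) ∧
    Bf q Ξ (An q s - 1 + (m+1)) = 2*s+1 := by
  obtain ⟨a, ha⟩ : ∃ a, An q s = a + 1 := ⟨An q s - 1, by have := An_pos (q := q) s; omega⟩
  obtain ⟨m', rfl⟩ : ∃ m', m = m' + 1 := ⟨m - 1, by omega⟩
  have hi1 : An q s - 1 + (m' + 1) = a + m' + 1 := by omega
  have hi2 : An q s - 1 + (m' + 1 + 1) = a + m' + 2 := by omega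
  rw [hi1] at hN hB
  rw [hi2]
  -- x at index j = a + m' + 1 : position j+1 = a + m' + 2 = An q s + (m'+1)
  have hx1 : xseq q Ξ (a + m' + 1) = 0 := by
    apply xseq_zero hq hqΞ (s := s) <;> omega
  -- x at index j = a + m' : position j+1 = An q s + m'
  have hx0 : xseq q Ξ (a + m') = 0 := by
    apply xseq_zero hq hqΞ (s := s) <;> omega
  constructor
  · rw [show a + m' + 2 = (a + m' + 1) + 1 from rfl, Nf_succ, hx1, if_pos rfl, hN]
    omega
  · rw [Bf_succ, hx0, hx1, if_neg (by simp), hB]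

lemma one_extend (s k : ℕ) (hk1 : An q s + Lnn q Ξ s ≤ k) (hk2 : k + 1 < An q (s+1))
    (hN : Nf q Ξ k = Sacc q Ξ (s+1)) (hB : Bf q Ξ k = 2*s+2) :
    Nf q Ξ (k+1) = Sacc q Ξ (s+1) ∧ Bf q Ξ (k+1) = 2*s+2 := by
  have hA := An_pos (q := q) s
  have hL := Lnn_pos hq hqΞ s
  obtain ⟨k', rfl⟩ : ∃ k', k = k' + 1 := ⟨k - 1, by omega⟩
  have hx1 : xseq q Ξ (k' + 1) = 1 := by
    apply xseq_one hq hqΞ hpowZ (s := s) <;> omega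
  have hx0 : xseq q Ξ k' = 1 := by
    apply xseq_one hq hqΞ hpowZ (s := s) <;> omega
  constructor
  · rw [Nf_succ, hx1, if_neg (by omega), hN]; omega
  · rw [Bf_succ, hx0, hx1, if_neg (by simp), hB]

lemma zone_to_one (s : ℕ)
    (hN : Nf q Ξ (An q s - 1 + Lnn q Ξ s) = Sacc q Ξ s + Lnn q Ξ s)
    (hB : Bf q Ξ (An q s - 1 + Lnn q Ξ s) = 2*s+1) :
    Nf q Ξ (An q s + Lnn q Ξ s) = Sacc q Ξ (s+1) ∧
    Bf q Ξ (An q s + Lnn q Ξ s) = 2*s+2 := by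
  have hA := An_pos (q := q) s
  have hL := Lnn_pos hq hqΞ s
  have hg := hgap hq hqΞ hpowZ s
  obtain ⟨a, ha⟩ : ∃ a, An q s = a + 1 := ⟨An q s - 1, by omega⟩
  obtain ⟨l, hl⟩ : ∃ l, Lnn q Ξ s = l + 1 := ⟨Lnn q Ξ s - 1, by omega⟩
  have hi1 : An q s - 1 + Lnn q Ξ s = a + l + 1 := by omega
  have hi2 : An q s + Lnn q Ξ s = a + l + 2 := by omega
  rw [hi1] at hN hB
  rw [hi2]
  -- j = a + l + 1 : j + 1 = An q s + Lnn q Ξ s, a one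
  have hx1 : xseq q Ξ (a + l + 1) = 1 := by
    apply xseq_one hq hqΞ hpowZ (s := s) <;> omega
  -- j = a + l : j + 1 = An q s + Lnn q Ξ s - 1, last zero of block s
  have hx0 : xseq q Ξ (a + l) = 0 := by
    apply xseq_zero hq hqΞ (s := s) <;> omega
  constructor
  · rw [show a + l + 2 = (a + l + 1) + 1 from rfl, Nf_succ, hx1, if_neg (by omega), hN,
      Sacc_succ hq hqΞ]
    omega
  · rw [Bf_succ, hx0, hx1, if_pos (by omega), hB]

lemma one_to_zone (s : ℕ)
    (hN : Nf q Ξ (An q (s+1) - 1) = Sacc q Ξ (s+1))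
    (hB : Bf q Ξ (An q (s+1) - 1) = 2*s+2) :
    Nf q Ξ (An q (s+1) - 1 + 1) = Sacc q Ξ (s+1) + 1 ∧
    Bf q Ξ (An q (s+1) - 1 + 1) = 2*(s+1)+1 := by
  have hA := An_pos (q := q) s
  have hL := Lnn_pos hq hqΞ s
  have hL' := Lnn_pos hq hqΞ (s+1)
  have hg := hgap hq hqΞ hpowZ s
  obtain ⟨b, hb⟩ : ∃ b, An q (s+1) = b + 2 := ⟨An q (s+1) - 2, by omega⟩
  have hi1 : An q (s+1) - 1 = b + 1 := by omega
  rw [hi1] at hN hB ⊢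
  -- j = b + 1 : j + 1 = An q (s+1), first zero of block s+1
  have hx1 : xseq q Ξ (b + 1) = 0 := by
    apply xseq_zero hq hqΞ (s := s+1) <;> omega
  -- j = b : j + 1 = An q (s+1) - 1, a one of block s
  have hx0 : xseq q Ξ b = 1 := by
    apply xseq_one hq hqΞ hpowZ (s := s) <;> omega
  constructor
  · rw [show b + 1 + 1 = (b + 1) + 1 from rfl, Nf_succ, hx1, if_pos rfl, hN]
  · rw [Bf_succ, hx0, hx1, if_pos (by omega), hB]
    omega

omit hpowZ in
lemma zone_all (s : ℕ)
    (hstart : Nf q Ξ (An q s - 1 + 1) = Sacc q Ξ s + 1 ∧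
      Bf q Ξ (An q s - 1 + 1) = 2*s+1) :
    ZoneP q Ξ s := by
  intro m hm1 hm2
  induction m with
  | zero => omega
  | succ m ih =>
    rcases Nat.eq_zero_or_pos m with h | h
    · subst h; exact hstart
    · obtain ⟨hN, hB⟩ := ih (by omega) (by omega)
      exact zone_extend hq hqΞ s m (by omega) (by omega) hN hB

lemma one_all (s : ℕ)
    (hbase : Nf q Ξ (An q s + Lnn q Ξ s) = Sacc q Ξ (s+1) ∧
      Bf q Ξ (An q s + Lnn q Ξ s) = 2*s+2) :
    OneP q Ξ s := by
  intro k hk1 hk2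
  induction k, hk1 using Nat.le_induction with
  | base => exact hbase
  | succ k hk ih =>
    have hg := hgap hq hqΞ hpowZ s
    obtain ⟨hN, hB⟩ := ih (by omega)
    exact one_extend hq hqΞ hpowZ s k hk (by omega) hN hB

lemma main_vals (s : ℕ) : ZoneP q Ξ s ∧ OneP q Ξ s := by
  induction s with
  | zero =>
    have hL := Lnn_pos hq hqΞ 0
    have hA0 : An q 0 = 1 := An_zero
    have hx0 : xseq q Ξ 0 = 0 := by
      apply xseq_zero hq hqΞ (s := 0) <;> omega
    have hstart : Nf q Ξ (An q 0 - 1 + 1) = Sacc q Ξ 0 + 1 ∧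
        Bf q Ξ (An q 0 - 1 + 1) = 2*0+1 := by
      have hS0 : Sacc q Ξ 0 = 0 := by simp [Sacc]
      have h1 : An q 0 - 1 + 1 = 1 := by omega
      rw [h1, hS0, show (1:ℕ) = 0 + 1 from rfl, Nf_succ, Nf_zero, hx0]
      simp [Bf_one]
    have hZ : ZoneP q Ξ 0 := zone_all hq hqΞ 0 hstart
    refine ⟨hZ, one_all hq hqΞ hpowZ 0 ?_⟩
    obtain ⟨hN, hB⟩ := hZ (Lnn q Ξ 0) hL le_rfl
    exact zone_to_one hq hqΞ hpowZ 0 hN hB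
  | succ s ih =>
    obtain ⟨ihZ, ihO⟩ := ih
    have hg := hgap hq hqΞ hpowZ s
    have hL := Lnn_pos hq hqΞ s
    obtain ⟨hN, hB⟩ := ihO (An q (s+1) - 1) (by omega) le_rfl
    have hstart := one_to_zone hq hqΞ hpowZ s hN hB
    have hZ : ZoneP q Ξ (s+1) := zone_all hq hqΞ (s+1) hstart
    refine ⟨hZ, one_all hq hqΞ hpowZ (s+1) ?_⟩
    obtain ⟨hN', hB'⟩ := hZ (Lnn q Ξ (s+1)) (Lnn_pos hq hqΞ (s+1)) le_rfl
    exact zone_to_one hq hqΞ hpowZ (s+1) hN' hB'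

end main

section sums

/-- `ofReal (2^(c - n)) = ofReal (2^c) * 2⁻¹ ^ n` -/
lemma term_split (c : ℝ) (n : ℕ) :
    ENNReal.ofReal ((2:ℝ) ^ (c - (n:ℝ))) =
      ENNReal.ofReal ((2:ℝ) ^ c) * (2⁻¹ : ℝ≥0∞) ^ n := by
  have h1 : (2:ℝ) ^ (c - (n:ℝ)) = (2:ℝ) ^ c * ((2:ℝ)⁻¹) ^ n := by
    rw [Real.rpow_sub (by norm_num), Real.rpow_natCast, inv_pow]
    rw [div_eq_mul_inv]
  rw [h1, ENNReal.ofReal_mul (by positivity), ENNReal.ofReal_pow (by norm_num)]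
  congr 2
  rw [ENNReal.ofReal_inv_of_pos (by norm_num)]
  norm_num

lemma half_mul_two : (2⁻¹ : ℝ≥0∞) * 2 = 1 :=
  ENNReal.inv_mul_cancel (by norm_num) (by norm_num)

lemma geom_tail_le_one (L : ℕ) :
    ∑ i ∈ Finset.range L, (2⁻¹ : ℝ≥0∞) ^ (i+1) ≤ 1 := by
  have h1 : ∑ i ∈ Finset.range L, (2⁻¹ : ℝ≥0∞) ^ (i+1) ≤ ∑' i : ℕ, (2⁻¹ : ℝ≥0∞) ^ (i+1) :=
    ENNReal.sum_le_tsum _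
  have h2 : ∑' i : ℕ, (2⁻¹ : ℝ≥0∞) ^ (i+1) = 2⁻¹ * ∑' i : ℕ, (2⁻¹ : ℝ≥0∞) ^ i := by
    rw [← ENNReal.tsum_mul_left]
    congr 1 with i
    ring
  rw [h2, ENNReal.tsum_geometric] at h1
  have h3 : (1 - 2⁻¹ : ℝ≥0∞) = 2⁻¹ := by
    rw [ENNReal.sub_eq_of_eq_add (by norm_num)]
    rw [ENNReal.inv_two_add_inv_two]
  rw [h3, inv_inv, half_mul_two] at h1
  exact h1

end sums

noncomputable def fTerm (q Ξ : ℤ) (ξ τ : ℝ) (k : ℕ) : ℝ≥0∞ :=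
  ENNReal.ofReal ((2:ℝ) ^ (τ * ξ * (Bf q Ξ k : ℝ) - τ * (Nf q Ξ k : ℝ)))

section blocks
variable {q Ξ : ℤ} (hq : 3 ≤ q) (hqΞ : 1 ≤ q + Ξ)
  (hpowZ : q + 1 + Ξ ≤ 2 ^ (q.toNat - 1))
  {ξ τ : ℝ} (hξ1 : 1 ≤ (Ξ : ℝ) - 2 * ξ) (hτ : 1 ≤ τ)
include hq hqΞ hpowZ hξ1 hτ

omit hq hqΞ hpowZ hξ1 hτ in
lemma fTerm_zero : fTerm q Ξ ξ τ 0 = 1 := by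
  rw [fTerm, Nf_zero, Bf_zero]
  norm_num

lemma zone_block (S : ℕ) :
    ∑ k ∈ Finset.Ico (An q S) (An q S + Lnn q Ξ S), fTerm q Ξ ξ τ k ≤
      ENNReal.ofReal ((2:ℝ) ^ (τ * ξ)) * (2⁻¹ : ℝ≥0∞) ^ S := by
  rw [Finset.sum_Ico_eq_sum_range]
  simp only [Nat.add_sub_cancel_left]
  have hbound : ∀ i ∈ Finset.range (Lnn q Ξ S), fTerm q Ξ ξ τ (An q S + i) ≤
      (ENNReal.ofReal ((2:ℝ) ^ (τ * ξ)) * (2⁻¹ : ℝ≥0∞) ^ S) * (2⁻¹ : ℝ≥0∞) ^ (i+1) := by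
    intro i hi
    rw [Finset.mem_range] at hi
    have hA := An_pos (q := q) S
    have hidx : An q S - 1 + (i+1) = An q S + i := by omega
    obtain ⟨hN, hB⟩ := ((main_vals hq hqΞ hpowZ S).1 (i+1) (by omega) (by omega))
    rw [hidx] at hN hB
    rw [fTerm, hN, hB]
    have hSc : ((Sacc q Ξ S : ℕ) : ℝ) = (q:ℝ) * (S:ℝ)^2 + (S:ℝ) * (Ξ:ℝ) := by
      exact_mod_cast congrArg (fun z : ℤ => (z : ℝ)) (Sacc_cast hq hqΞ S)
    have hE : τ * ξ * ((2*S+1 : ℕ) : ℝ) - τ * ((Sacc q Ξ S + (i+1) : ℕ) : ℝ) ≤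
        τ * ξ - ((S + (i+1) : ℕ) : ℝ) := by
      push_cast [hSc]
      set c : ℝ := (Ξ:ℝ) - 2*ξ with hc
      have hq3 : (3:ℝ) ≤ (q:ℝ) := by exact_mod_cast hq
      have hS0 : (0:ℝ) ≤ (S:ℝ) := Nat.cast_nonneg S
      have hi0 : (0:ℝ) ≤ (i:ℝ) := Nat.cast_nonneg i
      have hP1 : (S:ℝ) + (i+1) ≤ c*S + q*(S:ℝ)^2 + (i+1) := by nlinarith
      have hP0 : (0:ℝ) ≤ c*S + q*(S:ℝ)^2 + (i+1) := by nlinarith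
      have hP2 : c*S + q*(S:ℝ)^2 + (i+1) ≤ τ * (c*S + q*(S:ℝ)^2 + (i+1)) :=
        le_mul_of_one_le_left hP0 hτ
      have hID : τ * ξ * (2*S+1) - τ * ((q*(S:ℝ)^2 + S*Ξ) + (i+1)) =
          τ * ξ - τ * (c*S + q*(S:ℝ)^2 + (i+1)) := by rw [hc]; ring
      rw [hID]
      linarith
    calc ENNReal.ofReal ((2:ℝ) ^ (τ * ξ * ((2*S+1 : ℕ) : ℝ) - τ * ((Sacc q Ξ S + (i+1) : ℕ) : ℝ)))
        ≤ ENNReal.ofReal ((2:ℝ) ^ (τ * ξ - ((S + (i+1) : ℕ) : ℝ))) :=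
          ENNReal.ofReal_le_ofReal (Real.rpow_le_rpow_of_exponent_le one_le_two hE)
    _ = ENNReal.ofReal ((2:ℝ) ^ (τ * ξ)) * (2⁻¹ : ℝ≥0∞) ^ (S + (i+1)) := term_split _ _
    _ = (ENNReal.ofReal ((2:ℝ) ^ (τ * ξ)) * (2⁻¹ : ℝ≥0∞) ^ S) * (2⁻¹ : ℝ≥0∞) ^ (i+1) := by
          rw [pow_add, mul_assoc]
  calc ∑ i ∈ Finset.range (Lnn q Ξ S), fTerm q Ξ ξ τ (An q S + i)
      ≤ ∑ i ∈ Finset.range (Lnn q Ξ S),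
          (ENNReal.ofReal ((2:ℝ) ^ (τ * ξ)) * (2⁻¹ : ℝ≥0∞) ^ S) * (2⁻¹ : ℝ≥0∞) ^ (i+1) :=
        Finset.sum_le_sum hbound
  _ = (ENNReal.ofReal ((2:ℝ) ^ (τ * ξ)) * (2⁻¹ : ℝ≥0∞) ^ S) *
        ∑ i ∈ Finset.range (Lnn q Ξ S), (2⁻¹ : ℝ≥0∞) ^ (i+1) := by rw [← Finset.mul_sum]
  _ ≤ (ENNReal.ofReal ((2:ℝ) ^ (τ * ξ)) * (2⁻¹ : ℝ≥0∞) ^ S) * 1 :=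
        mul_le_mul_right (geom_tail_le_one _) _
  _ = _ := mul_one _

end blocks

section blocks2
variable {q Ξ : ℤ} (hq : 3 ≤ q) (hqΞ : 1 ≤ q + Ξ)
  (hpowZ : q + 1 + Ξ ≤ 2 ^ (q.toNat - 1))
  {ξ τ : ℝ} (hξ1 : 1 ≤ (Ξ : ℝ) - 2 * ξ) (hτ : 1 ≤ τ)
include hq hqΞ hpowZ hξ1 hτ

lemma one_block (S : ℕ) :
    ∑ k ∈ Finset.Ico (An q S + Lnn q Ξ S) (An q (S+1)), fTerm q Ξ ξ τ k ≤
      (2⁻¹ : ℝ≥0∞) ^ (S+1) := by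
  set E : ℕ := q.toNat * (S+1)^2 with hEdef
  have hqE : ((q.toNat : ℤ) : ℝ) = (q : ℝ) := by rw [qtn hq]
  have hbound : ∀ k ∈ Finset.Ico (An q S + Lnn q Ξ S) (An q (S+1)),
      fTerm q Ξ ξ τ k ≤ (2⁻¹ : ℝ≥0∞) ^ ((S+1) + E) := by
    intro k hk
    rw [Finset.mem_Ico] at hk
    obtain ⟨hN, hB⟩ := (main_vals hq hqΞ hpowZ S).2 k hk.1 (by
      have := An_pos (q := q) (S+1); omega)
    rw [fTerm, hN, hB]
    have hSc : ((Sacc q Ξ (S+1) : ℕ) : ℝ) = (q:ℝ) * ((S:ℝ)+1)^2 + ((S:ℝ)+1) * (Ξ:ℝ) := by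
      have := congrArg (fun z : ℤ => (z : ℝ)) (Sacc_cast hq hqΞ (S+1))
      push_cast at this
      push_cast
      linarith
    have hE : τ * ξ * ((2*S+2 : ℕ) : ℝ) - τ * ((Sacc q Ξ (S+1) : ℕ) : ℝ) ≤
        (0:ℝ) - (((S+1) + E : ℕ) : ℝ) := by
      have hcE : ((E:ℕ):ℝ) = (q:ℝ) * ((S:ℝ)+1)^2 := by
        rw [hEdef]
        push_cast [← hqE]
        ring
      push_cast [hSc, hcE]
      set c : ℝ := (Ξ:ℝ) - 2*ξ with hc
      have hq3 : (3:ℝ) ≤ (q:ℝ) := by exact_mod_cast hq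
      have hS0 : (0:ℝ) ≤ (S:ℝ) := Nat.cast_nonneg S
      have hP1 : ((S:ℝ)+1) + q*((S:ℝ)+1)^2 ≤ c*((S:ℝ)+1) + q*((S:ℝ)+1)^2 := by nlinarith
      have hP0 : (0:ℝ) ≤ c*((S:ℝ)+1) + q*((S:ℝ)+1)^2 := by nlinarith
      have hP2 : c*((S:ℝ)+1) + q*((S:ℝ)+1)^2 ≤ τ * (c*((S:ℝ)+1) + q*((S:ℝ)+1)^2) :=
        le_mul_of_one_le_left hP0 hτ
      have hID : τ * ξ * (2*(S:ℝ)+2) - τ * ((q*((S:ℝ)+1)^2 + ((S:ℝ)+1)*Ξ)) =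
          - (τ * (c*((S:ℝ)+1) + q*((S:ℝ)+1)^2)) := by rw [hc]; ring
      rw [hID]
      linarith
    calc ENNReal.ofReal ((2:ℝ) ^ (τ * ξ * ((2*S+2 : ℕ) : ℝ) - τ * ((Sacc q Ξ (S+1) : ℕ) : ℝ)))
        ≤ ENNReal.ofReal ((2:ℝ) ^ ((0:ℝ) - (((S+1) + E : ℕ) : ℝ))) :=
          ENNReal.ofReal_le_ofReal (Real.rpow_le_rpow_of_exponent_le one_le_two hE)
    _ = ENNReal.ofReal ((2:ℝ) ^ (0:ℝ)) * (2⁻¹ : ℝ≥0∞) ^ ((S+1) + E) := term_split _ _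
    _ = (2⁻¹ : ℝ≥0∞) ^ ((S+1) + E) := by norm_num
  calc ∑ k ∈ Finset.Ico (An q S + Lnn q Ξ S) (An q (S+1)), fTerm q Ξ ξ τ k
      ≤ (Finset.Ico (An q S + Lnn q Ξ S) (An q (S+1))).card • (2⁻¹ : ℝ≥0∞) ^ ((S+1) + E) :=
        Finset.sum_le_card_nsmul _ _ _ hbound
  _ = ((Finset.Ico (An q S + Lnn q Ξ S) (An q (S+1))).card : ℝ≥0∞) *
        ((2⁻¹ : ℝ≥0∞) ^ (S+1) * (2⁻¹ : ℝ≥0∞) ^ E) := by rw [nsmul_eq_mul, pow_add]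
  _ ≤ ((2:ℝ≥0∞) ^ E) * ((2⁻¹ : ℝ≥0∞) ^ (S+1) * (2⁻¹ : ℝ≥0∞) ^ E) := by
        apply mul_le_mul_left
        have hcard : (Finset.Ico (An q S + Lnn q Ξ S) (An q (S+1))).card ≤ 2 ^ E := by
          rw [Nat.card_Ico]
          have : An q (S+1) = 2 ^ E := rfl
          omega
        calc ((Finset.Ico (An q S + Lnn q Ξ S) (An q (S+1))).card : ℝ≥0∞)
            ≤ ((2 ^ E : ℕ) : ℝ≥0∞) := Nat.cast_le.2 hcard
        _ = (2:ℝ≥0∞) ^ E := by push_cast; ring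
  _ = ((2:ℝ≥0∞) * 2⁻¹) ^ E * (2⁻¹ : ℝ≥0∞) ^ (S+1) := by rw [mul_pow]; ring
  _ = (2⁻¹ : ℝ≥0∞) ^ (S+1) := by
        rw [ENNReal.mul_inv_cancel (by norm_num) (by norm_num), one_pow, one_mul]

end blocks2

lemma geom_le_two (K : ℕ) : ∑ s ∈ Finset.range K, (2⁻¹:ℝ≥0∞)^s ≤ 2 := by
  have h1 := ENNReal.sum_le_tsum (f := fun s => (2⁻¹:ℝ≥0∞)^s) (Finset.range K)
  rw [ENNReal.tsum_geometric] at h1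
  have h3 : (1 - 2⁻¹:ℝ≥0∞) = 2⁻¹ := by
    rw [ENNReal.sub_eq_of_eq_add (by norm_num)]
    rw [ENNReal.inv_two_add_inv_two]
  rwa [h3, inv_inv] at h1

section cum
variable {q Ξ : ℤ} (hq : 3 ≤ q) (hqΞ : 1 ≤ q + Ξ)
  (hpowZ : q + 1 + Ξ ≤ 2 ^ (q.toNat - 1))
  {ξ τ : ℝ} (hξ1 : 1 ≤ (Ξ : ℝ) - 2 * ξ) (hτ : 1 ≤ τ)
include hq hqΞ hpowZ hξ1 hτ

lemma cum_bound (S : ℕ) :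
    ∑ k ∈ Finset.range (An q S), fTerm q Ξ ξ τ k ≤
      1 + ∑ s ∈ Finset.range S,
        (ENNReal.ofReal ((2:ℝ) ^ (τ * ξ)) * (2⁻¹ : ℝ≥0∞) ^ s + (2⁻¹ : ℝ≥0∞) ^ (s+1)) := by
  induction S with
  | zero =>
    rw [An_zero, Finset.sum_range_one, fTerm_zero]
    simp
  | succ S ih =>
    have hg := hgap hq hqΞ hpowZ S
    have h1 : An q S ≤ An q S + Lnn q Ξ S := Nat.le_add_right _ _
    have h2 : An q S + Lnn q Ξ S ≤ An q (S+1) := le_of_lt hg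
    have h0 : An q S ≤ An q (S+1) := le_trans h1 h2
    rw [← Finset.sum_range_add_sum_Ico _ h0,
      ← Finset.sum_Ico_consecutive _ h1 h2, Finset.sum_range_succ]
    have hz := zone_block hq hqΞ hpowZ hξ1 hτ S
    have ho := one_block hq hqΞ hpowZ hξ1 hτ S
    calc ∑ k ∈ Finset.range (An q S), fTerm q Ξ ξ τ k +
          (∑ k ∈ Finset.Ico (An q S) (An q S + Lnn q Ξ S), fTerm q Ξ ξ τ k +
           ∑ k ∈ Finset.Ico (An q S + Lnn q Ξ S) (An q (S+1)), fTerm q Ξ ξ τ k)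
        ≤ (1 + ∑ s ∈ Finset.range S,
            (ENNReal.ofReal ((2:ℝ) ^ (τ * ξ)) * (2⁻¹ : ℝ≥0∞) ^ s + (2⁻¹ : ℝ≥0∞) ^ (s+1))) +
          (ENNReal.ofReal ((2:ℝ) ^ (τ * ξ)) * (2⁻¹ : ℝ≥0∞) ^ S + (2⁻¹ : ℝ≥0∞) ^ (S+1)) :=
          add_le_add ih (add_le_add hz ho)
    _ = _ := by ring

end cum

lemma le_An {q : ℤ} (hq : 3 ≤ q) (K : ℕ) : K ≤ An q K := by
  rcases Nat.eq_zero_or_pos K with h | h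
  · subst h; exact Nat.zero_le _
  · have h1 : K < 2 ^ K := Nat.lt_two_pow_self
    have h2 : K ≤ q.toNat * K ^ 2 := by
      calc K ≤ K ^ 2 := Nat.le_self_pow (by norm_num) K
      _ ≤ q.toNat * K ^ 2 := Nat.le_mul_of_pos_left _ (by omega)
    have h3 : (2:ℕ) ^ K ≤ 2 ^ (q.toNat * K ^ 2) := Nat.pow_le_pow_right (by norm_num) h2
    exact le_of_lt (lt_of_lt_of_le h1 h3)


set_option maxHeartbeats 1000000 in
theorem stmt4 (Ξ q : ℤ) (hq : 3 ≤ q) (hqΞ : 1 ≤ q + Ξ)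
    (hpow : (q : ℝ) + 1 + (Ξ : ℝ) ≤ (2 : ℝ) ^ ((q : ℝ) - 1))
    (ξ : ℝ) (hξ1 : 1 ≤ (Ξ : ℝ) - 2 * ξ) (hξ2 : (Ξ : ℝ) - 2 * ξ ≤ 2) :
    ∀ τ : ℝ, 1 ≤ τ →
      Pi2 q Ξ ξ τ 0 ≤ ENNReal.ofReal (2 * ((2 : ℝ) ^ (τ * ξ) + 1)) := by
  intro τ hτ
  -- integer form of the power hypothesis
  have hqt : ((q.toNat : ℤ) : ℝ) = (q : ℝ) := by rw [qtn hq]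
  have hq1 : ((q.toNat - 1 : ℕ) : ℝ) = (q:ℝ) - 1 := by
    rw [Nat.cast_sub (by omega)]
    push_cast at hqt ⊢
    rw [hqt]
  have hpowZ : q + 1 + Ξ ≤ 2 ^ (q.toNat - 1) := by
    have h2 : (2:ℝ) ^ ((q:ℝ) - 1) = ((2 ^ (q.toNat - 1) : ℕ) : ℝ) := by
      rw [← hq1, Real.rpow_natCast]
      push_cast
      ring
    rw [h2] at hpow
    exact_mod_cast hpow
  -- rewrite the series with `fTerm`
  have hPi : Pi2 q Ξ ξ τ 0 = ∑' k, fTerm q Ξ ξ τ k := by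
    rw [Pi2]
    apply tsum_congr
    intro k
    rw [fTerm]
    congr 1
    ring
  rw [hPi]
  -- right-hand side equals `X * 2 + 2`
  set X := ENNReal.ofReal ((2:ℝ) ^ (τ * ξ)) with hX
  have hRHS : ENNReal.ofReal (2 * ((2 : ℝ) ^ (τ * ξ) + 1)) = X * 2 + 2 := by
    have hA : (0:ℝ) ≤ (2:ℝ) ^ (τ * ξ) := by positivity
    have h1 : (2:ℝ) * ((2 : ℝ) ^ (τ * ξ) + 1) = (2 : ℝ) ^ (τ * ξ) * 2 + 2 := by ring
    rw [h1, ENNReal.ofReal_add (by positivity) (by norm_num), ENNReal.ofReal_mul hA]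
    norm_num
    rfl
  rw [hRHS, ENNReal.tsum_eq_iSup_sum]
  apply iSup_le
  intro F
  set K := F.sup id + 1 with hK
  have hsub : F ⊆ Finset.range (An q K) := by
    intro j hj
    rw [Finset.mem_range]
    have hj1 : j ≤ F.sup id := Finset.le_sup (f := id) hj
    have hj2 : K ≤ An q K := le_An hq K
    omega
  calc ∑ k ∈ F, fTerm q Ξ ξ τ k ≤ ∑ k ∈ Finset.range (An q K), fTerm q Ξ ξ τ k :=
        Finset.sum_le_sum_of_subset hsub
  _ ≤ 1 + ∑ s ∈ Finset.range K,
        (X * (2⁻¹ : ℝ≥0∞) ^ s + (2⁻¹ : ℝ≥0∞) ^ (s+1)) :=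
        cum_bound hq hqΞ hpowZ hξ1 hτ K
  _ = 1 + (X * ∑ s ∈ Finset.range K, (2⁻¹ : ℝ≥0∞) ^ s +
        ∑ s ∈ Finset.range K, (2⁻¹ : ℝ≥0∞) ^ (s+1)) := by
        rw [Finset.sum_add_distrib, Finset.mul_sum]
  _ ≤ 1 + (X * 2 + 1) :=
        add_le_add_right (add_le_add (mul_le_mul_right (geom_le_two K) X)
          (geom_tail_le_one K)) 1
  _ = X * 2 + 2 := by ring
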